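/- Let T_1, T_2 : Z^(Z) → Z^(Z) be the endomorphisms of the free abelian group on countably many generators δ_u (u ∈ Z) defined by T_1 δ_u = -δ_u - δ_{u+1} and T_2 δ_u = δ_u - n δ_{u+1}, where n ≥ 1 is a fixed positive integer. Then the cokernel of the map (T_1, T_2) : Z^(Z) ⊕ Z^(Z) → Z^(Z), (x,y) ↦ T_1 x + T_2 y, is a cyclic group of order n+1 generated by the class of δ_0. -/

import Mathlib

/-- Let `T₁, T₂` be the endomorphisms of the free abelian group `ℤ^(ℤ)` with
`T₁ δᵤ = -δᵤ - δᵤ₊₁` and `T₂ δᵤ = δᵤ - n δᵤ₊₁` (`n ≥ 1`).  Then the cokernel of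
`(x,y) ↦ T₁x + T₂y` is cyclic of order `n+1`, generated by the class of `δ₀`. -/
theorem skewproduct_coker_cyclic (n : ℕ) (hn : 1 ≤ n)
    (T1 T2 : (ℤ →₀ ℤ) →ₗ[ℤ] (ℤ →₀ ℤ))
    (hT1 : ∀ u : ℤ, T1 (Finsupp.single u 1) =
      -Finsupp.single u 1 - Finsupp.single (u + 1) 1)
    (hT2 : ∀ u : ℤ, T2 (Finsupp.single u 1) =
      Finsupp.single u 1 - (n : ℤ) • Finsupp.single (u + 1) 1) :
    addOrderOf
        (Submodule.Quotient.mk (p := LinearMap.range (T1.coprod T2))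
          (Finsupp.single 0 1)) = n + 1 ∧
    ∀ c : (ℤ →₀ ℤ) ⧸ LinearMap.range (T1.coprod T2), ∃ m : ℤ,
      c = m • Submodule.Quotient.mk (p := LinearMap.range (T1.coprod T2))
        (Finsupp.single 0 1) := by
  set R := LinearMap.range (T1.coprod T2) with hRdef
  set g : (ℤ →₀ ℤ) ⧸ R :=
    Submodule.Quotient.mk (p := R) (Finsupp.single 0 1) with hgdef
  -- key relation: mk δ_{u+1} = - mk δ_u
  have hrel : ∀ u : ℤ,
      (Submodule.Quotient.mk (p := R) (Finsupp.single (u + 1) 1) :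
        (ℤ →₀ ℤ) ⧸ R) = - Submodule.Quotient.mk (p := R) (Finsupp.single u 1) := by
    intro u
    have hmem : Finsupp.single (u + 1) 1 - (-(Finsupp.single u 1)) ∈ R := by
      refine ⟨(-(Finsupp.single u 1), 0), ?_⟩
      simp only [LinearMap.coprod_apply, map_neg, map_zero, hT1 u]
      abel
    calc (Submodule.Quotient.mk (p := R) (Finsupp.single (u + 1) 1) :
            (ℤ →₀ ℤ) ⧸ R)
        = Submodule.Quotient.mk (p := R) (-(Finsupp.single u 1)) :=
          (Submodule.Quotient.eq R).mpr hmem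
      _ = - Submodule.Quotient.mk (p := R) (Finsupp.single u 1) := by
          simp
  -- (n+1) • δ₀ ∈ R
  have hnsmul : ((n : ℤ) + 1) • (Finsupp.single 0 1 : ℤ →₀ ℤ) ∈ R := by
    refine ⟨(-(Finsupp.single (-1) 1), -(Finsupp.single (-1) 1)), ?_⟩
    have h0 : (-1 : ℤ) + 1 = 0 := by norm_num
    simp only [LinearMap.coprod_apply, map_neg, hT1 (-1), hT2 (-1), h0]
    module
  have hg_ann : ((n : ℤ) + 1) • g = 0 := by
    rw [hgdef, ← Submodule.Quotient.mk_smul, Submodule.Quotient.mk_eq_zero]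
    exact hnsmul
  -- the sign homomorphism to ZMod (n+1)
  set e : ℤ → ZMod (n + 1) := fun u => if Even u then 1 else -1 with hedef
  have he_succ : ∀ u : ℤ, e (u + 1) = - e u := by
    intro u
    by_cases h : Even u
    · simp [hedef, h, Int.even_add_one]
    · simp [hedef, h, Int.even_add_one]
  set φ : (ℤ →₀ ℤ) →ₗ[ℤ] ZMod (n + 1) := Finsupp.linearCombination ℤ e with hφdef
  have hφ_single : ∀ u : ℤ, φ (Finsupp.single u 1) = e u := by
    intro u
    rw [hφdef, Finsupp.linearCombination_single, one_smul]
  have hn1 : (1 : ZMod (n + 1)) + (n : ZMod (n + 1)) = 0 := by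
    have : ((n + 1 : ℕ) : ZMod (n + 1)) = 0 := ZMod.natCast_self _
    push_cast at this
    rw [add_comm 1 (n : ZMod (n + 1))]; exact this
  have hker : R ≤ LinearMap.ker φ := by
    rintro z ⟨⟨x, y⟩, rfl⟩
    have h1 : φ.comp T1 = 0 := by
      apply Finsupp.lhom_ext'
      intro u
      apply LinearMap.ext_ring
      simp only [LinearMap.comp_apply, Finsupp.lsingle_apply, LinearMap.zero_apply]
      rw [hT1 u, map_sub, map_neg, hφ_single, hφ_single, he_succ]
      simp
    have h2 : φ.comp T2 = 0 := by
      apply Finsupp.lhom_ext'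
      intro u
      apply LinearMap.ext_ring
      simp only [LinearMap.comp_apply, Finsupp.lsingle_apply, LinearMap.zero_apply]
      rw [hT2 u, map_sub, map_smul, hφ_single, hφ_single, he_succ]
      have : e u - (n : ℤ) • (- e u) = (1 + (n : ZMod (n+1))) * e u := by
        rw [zsmul_eq_mul]
        push_cast
        ring
      rw [this, hn1]
      simp
    simp only [LinearMap.coprod_apply, map_add]
    have e1 : φ (T1 x) = 0 := by
      have := congrArg (fun f => f x) h1; simpa using this
    have e2 : φ (T2 y) = 0 := by
      have := congrArg (fun f => f y) h2; simpa using this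
    simp [LinearMap.mem_ker, e1, e2]
  set ψ : ((ℤ →₀ ℤ) ⧸ R) →ₗ[ℤ] ZMod (n + 1) := R.liftQ φ hker with hψdef
  have hψg : ψ g = 1 := by
    rw [hgdef, hψdef]
    rw [Submodule.liftQ_apply]
    rw [hφ_single]
    simp [hedef]
  -- order computation
  have hdvd1 : addOrderOf g ∣ n + 1 := by
    apply addOrderOf_dvd_of_nsmul_eq_zero
    have : ((n + 1 : ℕ) : ℤ) • g = 0 := by push_cast; exact hg_ann
    rwa [natCast_zsmul] at this
  have hdvd2 : (n + 1) ∣ addOrderOf g := by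
    have h1 : addOrderOf (ψ g) ∣ addOrderOf g := addOrderOf_map_dvd ψ.toAddMonoidHom g
    rwa [hψg, ZMod.addOrderOf_one] at h1
  have horder : addOrderOf g = n + 1 := Nat.dvd_antisymm hdvd1 hdvd2
  refine ⟨horder, ?_⟩
  -- generation
  have hsingle : ∀ u : ℤ, ∃ m : ℤ,
      (Submodule.Quotient.mk (p := R) (Finsupp.single u 1) : (ℤ →₀ ℤ) ⧸ R)
        = m • g := by
    intro u
    induction u using Int.induction_on with
    | zero => exact ⟨1, by simp [hgdef]⟩
    | succ i ih =>
      obtain ⟨m, hm⟩ := ih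
      exact ⟨-m, by rw [hrel, hm, neg_smul]⟩
    | pred i ih =>
      obtain ⟨m, hm⟩ := ih
      refine ⟨-m, ?_⟩
      have := hrel (-(i : ℤ) - 1)
      rw [sub_add_cancel] at this
      rw [eq_comm, neg_smul, neg_eq_iff_eq_neg, ← this, hm]
  have hall : ∀ x : ℤ →₀ ℤ, ∃ m : ℤ,
      (Submodule.Quotient.mk (p := R) x : (ℤ →₀ ℤ) ⧸ R) = m • g := by
    intro x
    induction x using Finsupp.induction_linear with
    | zero => exact ⟨0, by simp⟩
    | add a b ha hb =>
      obtain ⟨m1, h1⟩ := ha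
      obtain ⟨m2, h2⟩ := hb
      exact ⟨m1 + m2, by rw [Submodule.Quotient.mk_add, h1, h2, add_smul]⟩
    | single u b =>
      obtain ⟨m, hm⟩ := hsingle u
      refine ⟨b * m, ?_⟩
      have hb : (Finsupp.single u b : ℤ →₀ ℤ) = b • Finsupp.single u 1 := by
        rw [Finsupp.smul_single, smul_eq_mul, mul_one]
      rw [hb, Submodule.Quotient.mk_smul, hm, smul_smul]
  intro c
  obtain ⟨x, rfl⟩ := Submodule.Quotient.mk_surjective R c
  exact hall x
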